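/- Let G ≤ D_n act on R = Π_{Ã_{n-1}}, and suppose the unique reflection τ ∈ D_n fixing vertex e_i does not lie in G. Then in the skew group algebra R#G, the ideal generated by f_G = Σ_{g∈G} 1#g contains p#1 for every path p of length at least 2n+1; consequently the quotient (R#G)/(f_G) is finite dimensional over k. -/

import Mathlib

open scoped BigOperators

/-- Generators of the path algebra of the double of the extended Dynkin quiver Ã_{n-1}:
vertex idempotents `vtx i`, nonstar arrows `arr i : e_i → e_{i+1}`,
star arrows `star i : e_{i+1} → e_i`. -/
inductive PPGen (n : ℕ) : Type
  | vtx (i : ZMod n)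
  | arr (i : ZMod n)
  | star (i : ZMod n)

variable (K : Type) [Field K] (n : ℕ) [NeZero n]

abbrev PPFree := FreeAlgebra K (PPGen n)

noncomputable def E (i : ZMod n) : PPFree K n := FreeAlgebra.ι K (PPGen.vtx i)
noncomputable def A (i : ZMod n) : PPFree K n := FreeAlgebra.ι K (PPGen.arr i)
noncomputable def S (i : ZMod n) : PPFree K n := FreeAlgebra.ι K (PPGen.star i)

/-- Defining relations of the preprojective algebra Π_{Ã_{n-1}}: the path-algebra
relations for the double quiver, together with the preprojective relation
Ω = Σ_i (α_i α_i* − α_i* α_i) = 0. -/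
inductive PPRel : PPFree K n → PPFree K n → Prop
  | vtx_mul (i j : ZMod n) :
      PPRel (E K n i * E K n j) (if i = j then E K n i else 0)
  | vtx_sum : PPRel (∑ i : ZMod n, E K n i) 1
  | arr_left (i : ZMod n) : PPRel (E K n i * A K n i) (A K n i)
  | arr_right (i : ZMod n) : PPRel (A K n i * E K n (i + 1)) (A K n i)
  | arr_left' (i j : ZMod n) : j ≠ i → PPRel (E K n j * A K n i) 0
  | arr_right' (i j : ZMod n) : j ≠ i + 1 → PPRel (A K n i * E K n j) 0
  | star_left (i : ZMod n) : PPRel (E K n (i + 1) * S K n i) (S K n i)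
  | star_right (i : ZMod n) : PPRel (S K n i * E K n i) (S K n i)
  | star_left' (i j : ZMod n) : j ≠ i + 1 → PPRel (E K n j * S K n i) 0
  | star_right' (i j : ZMod n) : j ≠ i → PPRel (S K n i * E K n j) 0
  | preproj :
      PPRel (∑ i : ZMod n, (A K n i * S K n i - S K n i * A K n i)) 0

/-- The preprojective algebra Π_{Ã_{n-1}}. -/
abbrev Preproj := RingQuot (PPRel K n)

/-- The canonical projection from the free algebra onto Π_{Ã_{n-1}}. -/
noncomputable def pp : PPFree K n →ₐ[K] Preproj K n := RingQuot.mkAlgHom K (PPRel K n)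

/-- `aPath i ℓ` is the pure nonstar path α_i α_{i+1} ⋯ α_{i+ℓ-1} (with `aPath i 0 = e_i`). -/
noncomputable def aPath (i : ZMod n) : ℕ → PPFree K n
  | 0 => E K n i
  | (ℓ + 1) => A K n i * aPath (i + 1) ℓ

/-- `sPath j m` is the pure star path α_{j-1}* α_{j-2}* ⋯ α_{j-m}* starting at vertex j
(with `sPath j 0 = e_j`). -/
noncomputable def sPath (j : ZMod n) : ℕ → PPFree K n
  | 0 => E K n j
  | (m + 1) => S K n (j - 1) * sPath (j - 1) m

/-- The canonical-form path with source e_i consisting of ℓ nonstar arrows followed by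
m star arrows, as an element of Π_{Ã_{n-1}}. -/
noncomputable def cpath (i : ZMod n) (ℓ m : ℕ) : Preproj K n :=
  pp K n (aPath K n i ℓ * sPath K n (i + (ℓ : ZMod n)) m)

/-- The orbit sum O(ℓ,m): the sum over all paths in B_{ℓ,m} = Q_ℓQ_m* ∪ Q_mQ_ℓ*. -/
noncomputable def OO (ℓ m : ℕ) : Preproj K n :=
  if ℓ = m then ∑ i : ZMod n, cpath K n i ℓ ℓ
  else ∑ i : ZMod n, (cpath K n i ℓ m + cpath K n i m ℓ)

/-- Source of an arrow of the double quiver of Ã_{n-1}: `(false, j)` is the nonstar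
arrow α_j : e_j → e_{j+1}, `(true, j)` is the star arrow α_j* : e_{j+1} → e_j. -/
def dsrc (n : ℕ) : Bool × ZMod n → ZMod n
  | (false, j) => j
  | (true, j) => j + 1

/-- Target of an arrow of the double quiver of Ã_{n-1}. -/
def dtgt (n : ℕ) : Bool × ZMod n → ZMod n
  | (false, j) => j + 1
  | (true, j) => j


/-- The ambient group in which quiver automorphisms of the double of Ã_{n-1} live:
pairs of a permutation of the vertices and a permutation of the arrows. -/
abbrev PairPerm := Equiv.Perm (ZMod n) × Equiv.Perm (Bool × ZMod n)

/-- The rotation ρ : e_i ↦ e_{i+1}, α_i ↦ α_{i+1}, α_i* ↦ α_{i+1}*. -/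
def rho : PairPerm n :=
  (Equiv.addRight (1 : ZMod n), (Equiv.refl Bool).prodCongr (Equiv.addRight (1 : ZMod n)))

/-- The reflection r : e_i ↦ e_{n-i}, α_i ↦ α_{n-i-1}*, α_i* ↦ α_{n-i-1}. -/
def reflD : PairPerm n :=
  (Function.Involutive.toPerm (fun j => -j) (fun j => by simp),
   Function.Involutive.toPerm (fun a => (!a.1, -a.2 - 1))
     (fun a => by cases a with | mk b j => simp))

/-- The dihedral group D_n = ⟨ρ, r⟩ of quiver automorphisms of the double of Ã_{n-1}. -/
def Dn : Subgroup (PairPerm n) := Subgroup.closure {rho n, reflD n}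

/-- The reflection τ_i through the vertex e_i: e_j ↦ e_{2i-j}, α_m ↦ α_{2i-m-1}*,
α_m* ↦ α_{2i-m-1}. -/
def tau (i : ZMod n) : PairPerm n :=
  (Function.Involutive.toPerm (fun j => 2 * i - j) (fun j => by simp),
   Function.Involutive.toPerm (fun a => (!a.1, 2 * i - a.2 - 1))
     (fun a => by
       cases a with
       | mk b j => simp only [Bool.not_not, Prod.mk.injEq]; exact ⟨trivial, by ring⟩))

/-- `isPathFrom n i w` : the word `w` of arrows of the double quiver is a path with
source vertex `e_i`. -/
def isPathFrom (i : ZMod n) : List (Bool × ZMod n) → Prop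
  | [] => True
  | a :: rest => dsrc n a = i ∧ isPathFrom (dtgt n a) rest

/-- `shape n ℓ m w` : the word `w` consists of exactly ℓ nonstar arrows followed by
m star arrows, i.e. `w ∈ Q_ℓ Q_m*`. -/
def shape (ℓ m : ℕ) (w : List (Bool × ZMod n)) : Prop :=
  w.map Prod.fst = List.replicate ℓ false ++ List.replicate m true

/-- The set B_{ℓ,m} = Q_ℓ Q_m* ∪ Q_m Q_ℓ* of canonical-form paths (recorded together
with their source vertex). -/
def Bset (ℓ m : ℕ) : Set (ZMod n × List (Bool × ZMod n)) :=
  {p | isPathFrom n p.1 p.2 ∧ (shape n ℓ m p.2 ∨ shape n m ℓ p.2)}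

/-- The action of a pair of permutations on a path-with-source. -/
def pact (g : PairPerm n) (p : ZMod n × List (Bool × ZMod n)) :
    ZMod n × List (Bool × ZMod n) :=
  (g.1 p.1, p.2.map g.2)

/-- An arrow of the double quiver: `(false, i)` is the nonstar arrow α_i,
`(true, i)` is the star arrow α_i*. -/
def arrGen (n : ℕ) : Bool × ZMod n → PPGen n
  | (false, i) => PPGen.arr i
  | (true, i) => PPGen.star i

/-- The product in the free path algebra of the arrows in a word. -/
noncomputable def wordProd (w : List (Bool × ZMod n)) : PPFree K n :=
  (w.map fun a => FreeAlgebra.ι K (arrGen n a)).prod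

/-- The action of a pair of permutations (a quiver automorphism of the double of
Ã_{n-1}) on the generators of the path algebra. -/
def actGen (g : PairPerm n) : PPGen n → PPGen n
  | PPGen.vtx i => PPGen.vtx (g.1 i)
  | PPGen.arr i => arrGen n (g.2 (false, i))
  | PPGen.star i => arrGen n (g.2 (true, i))

variable (G : Subgroup (PairPerm n))

/-- The free algebra on the generators of R = Π_{Ã_{n-1}} together with the elements
of the group G, used to present the skew group algebra R#G. -/
abbrev SkFree := FreeAlgebra K (PPGen n ⊕ ↥G)

noncomputable def dg (x : PPGen n) : SkFree K n G := FreeAlgebra.ι K (Sum.inl x)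
noncomputable def gg (g : ↥G) : SkFree K n G := FreeAlgebra.ι K (Sum.inr g)

/-- The embedding of the free path algebra into the free skew algebra. -/
noncomputable def embR : PPFree K n →ₐ[K] SkFree K n G :=
  FreeAlgebra.lift K fun x => FreeAlgebra.ι K (Sum.inl (α := PPGen n) x)

/-- Defining relations of the skew group algebra R#G: the relations of
R = Π_{Ã_{n-1}}, the group relations of G (g·h = gh, 1_G = 1), and the skew
commutation relations (1#g)(x#1) = (g(x)#1)(1#g). -/
inductive SkRel : SkFree K n G → SkFree K n G → Prop
  | base {a b : PPFree K n} : PPRel K n a b → SkRel (embR K n G a) (embR K n G b)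
  | grp_one : SkRel (gg K n G 1) 1
  | grp_mul (g h : ↥G) : SkRel (gg K n G g * gg K n G h) (gg K n G (g * h))
  | comm (g : ↥G) (x : PPGen n) :
      SkRel (gg K n G g * dg K n G x) (dg K n G (actGen n (↑g) x) * gg K n G g)

/-- The skew group algebra R#G. -/
abbrev SkAlg := RingQuot (SkRel K n G)

noncomputable def ppk : SkFree K n G →ₐ[K] SkAlg K n G := RingQuot.mkAlgHom K (SkRel K n G)

/-- The element f_G = Σ_{g ∈ G} 1#g of R#G. -/
noncomputable def fG : SkAlg K n G :=
  letI : Fintype ↥G := Fintype.ofFinite ↥G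
  ppk K n G (∑ g : ↥G, gg K n G g)

/-- The two-sided ideal of R#G generated by f_G (as the K-span of all a·f_G·b). -/
noncomputable def idealFG : Submodule K (SkAlg K n G) :=
  Submodule.span K {x : SkAlg K n G | ∃ a b : SkAlg K n G, x = a * fG K n G * b}


section St19Aux
set_option linter.unusedSectionVars false

lemma pp_rel {a b : PPFree K n} (h : PPRel K n a b) : pp K n a = pp K n b :=
  RingQuot.mkAlgHom_rel K h

lemma pEE (i j : ZMod n) :
    pp K n (E K n i) * pp K n (E K n j) = if i = j then pp K n (E K n i) else 0 := by
  rw [← map_mul, pp_rel K n (PPRel.vtx_mul i j)]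
  split_ifs <;> simp

lemma pEA (j i : ZMod n) :
    pp K n (E K n j) * pp K n (A K n i) = if j = i then pp K n (A K n i) else 0 := by
  by_cases h : j = i
  · subst h; rw [if_pos rfl, ← map_mul, pp_rel K n (PPRel.arr_left _)]
  · rw [if_neg h, ← map_mul, pp_rel K n (PPRel.arr_left' i j h), map_zero]

lemma pAE (i t : ZMod n) :
    pp K n (A K n i) * pp K n (E K n t) = if t = i + 1 then pp K n (A K n i) else 0 := by
  by_cases h : t = i + 1
  · subst h; rw [if_pos rfl, ← map_mul, pp_rel K n (PPRel.arr_right _)]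
  · rw [if_neg h, ← map_mul, pp_rel K n (PPRel.arr_right' i t h), map_zero]

lemma pES (t i : ZMod n) :
    pp K n (E K n t) * pp K n (S K n i) = if t = i + 1 then pp K n (S K n i) else 0 := by
  by_cases h : t = i + 1
  · subst h; rw [if_pos rfl, ← map_mul, pp_rel K n (PPRel.star_left _)]
  · rw [if_neg h, ← map_mul, pp_rel K n (PPRel.star_left' i t h), map_zero]

lemma pSE (i t : ZMod n) :
    pp K n (S K n i) * pp K n (E K n t) = if t = i then pp K n (S K n i) else 0 := by
  by_cases h : t = i
  · subst h; rw [if_pos rfl, ← map_mul, pp_rel K n (PPRel.star_right _)]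
  · rw [if_neg h, ← map_mul, pp_rel K n (PPRel.star_right' i t h), map_zero]

lemma pAS (j : ZMod n) :
    pp K n (A K n j) * pp K n (S K n j)
      = pp K n (S K n (j - 1)) * pp K n (A K n (j - 1)) := by
  have h0 : ∑ m : ZMod n, (pp K n (A K n m) * pp K n (S K n m)
      - pp K n (S K n m) * pp K n (A K n m)) = 0 := by
    have h := pp_rel K n (PPRel.preproj (K := K) (n := n))
    simpa [map_sum, map_sub, map_mul] using h
  have h1 := congrArg (fun x => pp K n (E K n j) * x * pp K n (E K n j)) h0
  simp only [Finset.mul_sum, Finset.sum_mul, mul_zero, zero_mul, mul_sub, sub_mul] at h1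
  rw [Finset.sum_sub_distrib] at h1
  have e1 : ∀ m : ZMod n,
      pp K n (E K n j) * (pp K n (A K n m) * pp K n (S K n m)) * pp K n (E K n j)
      = if j = m then pp K n (A K n m) * pp K n (S K n m) else 0 := by
    intro m
    have : pp K n (E K n j) * (pp K n (A K n m) * pp K n (S K n m)) * pp K n (E K n j)
        = (pp K n (E K n j) * pp K n (A K n m)) * (pp K n (S K n m) * pp K n (E K n j)) := by
      noncomm_ring
    rw [this, pEA, pSE]
    split_ifs <;> simp
  have e2 : ∀ m : ZMod n,
      pp K n (E K n j) * (pp K n (S K n m) * pp K n (A K n m)) * pp K n (E K n j)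
      = if j = m + 1 then pp K n (S K n m) * pp K n (A K n m) else 0 := by
    intro m
    have : pp K n (E K n j) * (pp K n (S K n m) * pp K n (A K n m)) * pp K n (E K n j)
        = (pp K n (E K n j) * pp K n (S K n m)) * (pp K n (A K n m) * pp K n (E K n j)) := by
      noncomm_ring
    rw [this, pES, pAE]
    split_ifs <;> simp
  rw [Finset.sum_congr rfl (fun m _ => e1 m), Finset.sum_congr rfl (fun m _ => e2 m)] at h1
  rw [Finset.sum_ite_eq Finset.univ j
    (fun m => pp K n (A K n m) * pp K n (S K n m)), if_pos (Finset.mem_univ _)] at h1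
  rw [Finset.sum_eq_single (j - 1)
      (fun m _ hm => if_neg (fun h => hm (by rw [h]; ring)))
      (fun h => absurd (Finset.mem_univ _) h), if_pos (by ring)] at h1
  exact sub_eq_zero.mp h1

end St19Aux

section St19Aux2
set_option linter.unusedSectionVars false

lemma arrGen_false (j : ZMod n) :
    FreeAlgebra.ι K (arrGen n (false, j)) = A K n j := rfl

lemma arrGen_true (j : ZMod n) :
    FreeAlgebra.ι K (arrGen n (true, j)) = S K n j := rfl

lemma aPath_succ (i : ZMod n) (r : ℕ) :
    aPath K n i (r + 1) = A K n i * aPath K n (i + 1) r := rfl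

lemma aPath_zero (i : ZMod n) : aPath K n i 0 = E K n i := rfl

lemma sPath_succ (j : ZMod n) (m : ℕ) :
    sPath K n j (m + 1) = S K n (j - 1) * sPath K n (j - 1) m := rfl

lemma sPath_zero (j : ZMod n) : sPath K n j 0 = E K n j := rfl

lemma paEl (t k : ZMod n) (r : ℕ) :
    pp K n (E K n t) * pp K n (aPath K n k r)
      = if t = k then pp K n (aPath K n k r) else 0 := by
  cases r with
  | zero =>
      rw [aPath_zero, pEE]
      split_ifs with h
      · rw [h]
      · rfl
  | succ r =>
      rw [aPath_succ, map_mul, ← mul_assoc, pEA]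
      split_ifs <;> simp

lemma psEl (t k : ZMod n) (m : ℕ) :
    pp K n (E K n t) * pp K n (sPath K n k m)
      = if t = k then pp K n (sPath K n k m) else 0 := by
  cases m with
  | zero =>
      rw [sPath_zero, pEE]
      split_ifs with h
      · rw [h]
      · rfl
  | succ m =>
      rw [sPath_succ, map_mul, ← mul_assoc, pES,
        show k - 1 + 1 = k by ring]
      split_ifs <;> simp

lemma paEr (k : ZMod n) (r : ℕ) (t : ZMod n) :
    pp K n (aPath K n k r) * pp K n (E K n t)
      = if t = k + (r : ZMod n) then pp K n (aPath K n k r) else 0 := by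
  induction r generalizing k with
  | zero => rw [aPath_zero, pEE, show k + ((0:ℕ) : ZMod n) = k by push_cast; ring]
            split_ifs with h1 h2 h2 <;> first | rfl | (try simp_all) <;> simp_all [eq_comm]
  | succ r ih =>
      rw [aPath_succ, map_mul, mul_assoc, ih (k+1),
        show k + (((r:ℕ)+1 : ℕ) : ZMod n) = (k + 1) + (r : ZMod n) by push_cast; ring]
      split_ifs <;> simp

lemma psEr (k : ZMod n) (m : ℕ) (t : ZMod n) :
    pp K n (sPath K n k m) * pp K n (E K n t)
      = if t = k - (m : ZMod n) then pp K n (sPath K n k m) else 0 := by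
  induction m generalizing k with
  | zero => rw [sPath_zero, pEE, show k - ((0:ℕ) : ZMod n) = k by push_cast; ring]
            split_ifs with h1 h2 h2 <;> first | rfl | (try simp_all) <;> simp_all [eq_comm]
  | succ m ih =>
      rw [sPath_succ, map_mul, mul_assoc, ih (k-1),
        show k - (((m:ℕ)+1 : ℕ) : ZMod n) = (k - 1) - (m : ZMod n) by push_cast; ring]
      split_ifs <;> simp

lemma aPath_split (k r : ℕ) (i : ZMod n) :
    pp K n (aPath K n i (k + r))
      = pp K n (aPath K n i k) * pp K n (aPath K n (i + (k : ZMod n)) r) := by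
  induction k generalizing i with
  | zero =>
      rw [Nat.zero_add, aPath_zero, show i + ((0:ℕ) : ZMod n) = i by push_cast; ring,
        paEl, if_pos rfl]
  | succ k ih =>
      rw [show k + 1 + r = (k + r) + 1 by omega, aPath_succ, map_mul, ih (i+1),
        aPath_succ, map_mul, mul_assoc,
        show i + 1 + (k : ZMod n) = i + (((k:ℕ)+1 : ℕ) : ZMod n) by push_cast; ring]

lemma sPath_split (k r : ℕ) (j : ZMod n) :
    pp K n (sPath K n j (k + r))
      = pp K n (sPath K n j k) * pp K n (sPath K n (j - (k : ZMod n)) r) := by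
  induction k generalizing j with
  | zero =>
      rw [Nat.zero_add, sPath_zero, show j - ((0:ℕ) : ZMod n) = j by push_cast; ring,
        psEl, if_pos rfl]
  | succ k ih =>
      rw [show k + 1 + r = (k + r) + 1 by omega, sPath_succ, map_mul, ih (j-1),
        sPath_succ, map_mul, mul_assoc,
        show j - 1 - (k : ZMod n) = j - (((k:ℕ)+1 : ℕ) : ZMod n) by push_cast; ring]

lemma wordProd_nil : wordProd K n ([] : List (Bool × ZMod n)) = 1 := rfl

lemma wordProd_cons (a : Bool × ZMod n) (w : List (Bool × ZMod n)) :
    wordProd K n (a :: w) = FreeAlgebra.ι K (arrGen n a) * wordProd K n w := by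
  simp [wordProd]

lemma wordProd_append (u v : List (Bool × ZMod n)) :
    wordProd K n (u ++ v) = wordProd K n u * wordProd K n v := by
  simp [wordProd]

end St19Aux2

section St19Aux3
set_option linter.unusedSectionVars false

lemma falseWord : ∀ (w : List (Bool × ZMod n)), (∀ x ∈ w, x.1 = false) → ∀ j : ZMod n,
    pp K n (wordProd K n ((false, j) :: w)) = 0 ∨
    pp K n (wordProd K n ((false, j) :: w)) = pp K n (aPath K n j (w.length + 1)) := by
  intro w
  induction w with
  | nil =>
      intro _ j; right
      simp only [List.length_nil]
      rw [wordProd_cons, wordProd_nil, mul_one, arrGen_false,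
        show aPath K n j 1 = A K n j * E K n (j+1) from rfl, map_mul, pAE, if_pos rfl]
  | cons x w' ih =>
      intro hall j
      obtain ⟨b, k⟩ := x
      have hb : b = false := hall (b, k) (List.mem_cons_self)
      subst hb
      have ih' := ih (fun y hy => hall y (List.mem_cons_of_mem _ hy)) k
      rw [wordProd_cons, arrGen_false, map_mul]
      rcases ih' with h0 | h1
      · left; rw [h0, mul_zero]
      · rw [h1]
        by_cases hk : k = j + 1
        · right
          subst hk
          rw [List.length_cons, show aPath K n j (w'.length + 1 + 1)
            = A K n j * aPath K n (j+1) (w'.length+1) from rfl, map_mul]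
        · left
          rw [show pp K n (aPath K n k (w'.length + 1))
              = pp K n (E K n k) * pp K n (aPath K n k (w'.length+1)) by
                rw [paEl, if_pos rfl], ← mul_assoc]
          have hz : pp K n (A K n j) * pp K n (E K n k) = 0 := by
            have h := pAE K n j k
            rwa [if_neg hk] at h
          rw [hz, zero_mul]

lemma trueWord : ∀ (w : List (Bool × ZMod n)), (∀ x ∈ w, x.1 = true) → ∀ j : ZMod n,
    pp K n (wordProd K n ((true, j) :: w)) = 0 ∨
    pp K n (wordProd K n ((true, j) :: w)) = pp K n (sPath K n (j + 1) (w.length + 1)) := by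
  intro w
  induction w with
  | nil =>
      intro _ j; right
      simp only [List.length_nil]
      rw [wordProd_cons, wordProd_nil, mul_one, arrGen_true,
        sPath_succ, sPath_zero, show (j : ZMod n) + 1 - 1 = j by ring, map_mul, pSE, if_pos rfl]
  | cons x w' ih =>
      intro hall j
      obtain ⟨b, k⟩ := x
      have hb : b = true := hall (b, k) (List.mem_cons_self)
      subst hb
      have ih' := ih (fun y hy => hall y (List.mem_cons_of_mem _ hy)) k
      rw [wordProd_cons, arrGen_true, map_mul]
      rcases ih' with h0 | h1
      · left; rw [h0, mul_zero]
      · rw [h1]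
        by_cases hk : k + 1 = j
        · right
          subst hk
          rw [List.length_cons]
          conv_rhs => rw [sPath_succ]
          rw [show k + 1 + 1 - 1 = k + 1 by ring, map_mul]
        · left
          rw [show pp K n (sPath K n (k + 1) (w'.length + 1))
              = pp K n (E K n (k + 1)) * pp K n (sPath K n (k+1) (w'.length+1)) by
                rw [psEl, if_pos rfl], ← mul_assoc]
          have hz : pp K n (S K n j) * pp K n (E K n (k + 1)) = 0 := by
            have h := pSE K n j (k + 1)
            rwa [if_neg hk] at h
          rw [hz, zero_mul]

lemma sortedWord (w : List (Bool × ZMod n)) (ℓ m : ℕ)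
    (hsh : w.map Prod.fst = List.replicate ℓ false ++ List.replicate m true)
    (hne : w ≠ []) :
    pp K n (wordProd K n w) = 0 ∨ ∃ i : ZMod n,
      pp K n (wordProd K n w) = pp K n (aPath K n i ℓ * sPath K n (i + (ℓ : ZMod n)) m) := by
  have hlen : w.length = ℓ + m := by
    have := congrArg List.length hsh
    simpa using this
  set wf := w.take ℓ with hwf
  set wt := w.drop ℓ with hwt
  have hw : w = wf ++ wt := (List.take_append_drop ℓ w).symm
  have hmapf : wf.map Prod.fst = List.replicate ℓ false := by
    rw [hwf, List.map_take, hsh, List.take_left' (by simp)]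
  have hmapt : wt.map Prod.fst = List.replicate m true := by
    rw [hwt, List.map_drop, hsh, List.drop_left' (by simp)]
  have hlf : wf.length = ℓ := by
    have := congrArg List.length hmapf; simpa using this
  have hlt : wt.length = m := by
    have := congrArg List.length hmapt; simpa using this
  -- all-false / all-true membership facts
  have hallf : ∀ x ∈ wf, x.1 = false := by
    intro x hx
    have : x.1 ∈ List.replicate ℓ false := by
      rw [← hmapf]; exact List.mem_map_of_mem hx
    exact List.eq_of_mem_replicate this
  have hallt : ∀ x ∈ wt, x.1 = true := by
    intro x hx
    have : x.1 ∈ List.replicate m true := by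
      rw [← hmapt]; exact List.mem_map_of_mem hx
    exact List.eq_of_mem_replicate this
  rcases hf : wf with _ | ⟨af, wf'⟩
  · -- ℓ = 0
    have hl0 : ℓ = 0 := by rw [← hlf, hf]; rfl
    subst hl0
    rcases ht : wt with _ | ⟨at', wt'⟩
    · exact absurd (by rw [hw, hf, ht]; rfl) hne
    · obtain ⟨bt, kt⟩ := at'
      have hbt : bt = true := hallt _ (by rw [ht]; exact List.mem_cons_self)
      subst hbt
      have hm : m = wt'.length + 1 := by rw [← hlt, ht]; rfl
      have hww : w = (true, kt) :: wt' := by rw [hw, hf, ht]; rfl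
      rcases trueWord K n wt' (fun y hy => hallt y (by rw [ht]; exact List.mem_cons_of_mem _ hy)) kt
        with h0 | h1
      · left; rw [hww]; exact h0
      · right; refine ⟨kt + 1, ?_⟩
        rw [hww, h1, hm, map_mul, aPath_zero,
          show (kt : ZMod n) + 1 + ((0:ℕ) : ZMod n) = kt + 1 by push_cast; ring,
          psEl, if_pos rfl]
  · obtain ⟨bf, kf⟩ := af
    have hbf : bf = false := hallf _ (by rw [hf]; exact List.mem_cons_self)
    subst hbf
    have hl1 : ℓ = wf'.length + 1 := by rw [← hlf, hf]; rfl
    have hff := falseWord K n wf' (fun y hy => hallf y (by rw [hf]; exact List.mem_cons_of_mem _ hy)) kf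
    rcases ht : wt with _ | ⟨at', wt'⟩
    · -- m = 0
      have hm0 : m = 0 := by rw [← hlt, ht]; rfl
      subst hm0
      have hww : w = (false, kf) :: wf' := by rw [hw, hf, ht]; simp
      rcases hff with h0 | h1
      · left; rw [hww]; exact h0
      · right; refine ⟨kf, ?_⟩
        rw [hww, h1, hl1, map_mul, sPath_zero, paEr, if_pos rfl]
    · obtain ⟨bt, kt⟩ := at'
      have hbt : bt = true := hallt _ (by rw [ht]; exact List.mem_cons_self)
      subst hbt
      have hm : m = wt'.length + 1 := by rw [← hlt, ht]; rfl
      have htt := trueWord K n wt' (fun y hy => hallt y (by rw [ht]; exact List.mem_cons_of_mem _ hy)) kt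
      have hww : pp K n (wordProd K n w)
          = pp K n (wordProd K n ((false, kf) :: wf')) * pp K n (wordProd K n ((true, kt) :: wt')) := by
        rw [hw, hf, ht, ← map_mul, ← wordProd_append]
      rcases hff with h0 | h1
      · left; rw [hww, h0, zero_mul]
      · rcases htt with h0' | h1'
        · left; rw [hww, h0', mul_zero]
        · by_cases hc : (kt : ZMod n) + 1 = kf + (ℓ : ZMod n)
          · right; refine ⟨kf, ?_⟩
            rw [hww, h1, h1', map_mul, ← hl1, ← hm, hc]
          · left
            rw [hww, h1, h1',
              show pp K n (aPath K n kf (wf'.length + 1))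
                = pp K n (aPath K n kf (wf'.length + 1)) * pp K n (E K n (kf + (ℓ : ZMod n))) by
                  rw [paEr, if_pos (by rw [hl1])],
              show pp K n (sPath K n (kt + 1) (wt'.length + 1))
                = pp K n (E K n (kt + 1)) * pp K n (sPath K n (kt+1) (wt'.length+1)) by
                  rw [psEl, if_pos rfl]]
            have hz : pp K n (E K n (kf + (ℓ : ZMod n))) * pp K n (E K n (kt + 1)) = 0 := by
              rw [pEE, if_neg (fun h => hc (by rw [h]))]
            calc pp K n (aPath K n kf (wf'.length + 1)) * pp K n (E K n (kf + (ℓ:ZMod n)))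
                  * (pp K n (E K n (kt + 1)) * pp K n (sPath K n (kt+1) (wt'.length+1)))
                = pp K n (aPath K n kf (wf'.length + 1))
                  * (pp K n (E K n (kf + (ℓ:ZMod n))) * pp K n (E K n (kt + 1)))
                  * pp K n (sPath K n (kt+1) (wt'.length+1)) := by noncomm_ring
              _ = 0 := by rw [hz, mul_zero, zero_mul]

end St19Aux3

section St19Aux4
set_option linter.unusedSectionVars false

/-- Inversion count of a boolean word: number of (true, false) pairs out of order. -/
def invB : List Bool → ℕ
  | [] => 0
  | b :: t => (if b then t.count false else 0) + invB t

lemma invB_append (u v : List Bool) :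
    invB (u ++ v) = invB u + invB v + u.count true * v.count false := by
  induction u with
  | nil => simp [invB]
  | cons b t ih =>
      cases b <;> simp [invB, ih, List.count_cons, List.count_append] <;> ring

lemma count_false_add_count_true (l : List Bool) :
    l.count false + l.count true = l.length := by
  induction l with
  | nil => rfl
  | cons b t ih => cases b <;> simp [List.count_cons] <;> omega

lemma invB_zero_sorted : ∀ l : List Bool, invB l = 0 →
    l = List.replicate (l.count false) false ++ List.replicate (l.count true) true := by
  intro l
  induction l with
  | nil => intro _; rfl
  | cons b t ih =>
      intro h0
      cases b with
      | false =>
          have ht := ih (by simpa [invB] using h0)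
          calc false :: t
              = false :: (List.replicate (t.count false) false
                  ++ List.replicate (t.count true) true) := by rw [← ht]
            _ = _ := by simp [List.count_cons, List.replicate_succ]
      | true =>
          simp only [invB, if_true, Nat.add_eq_zero] at h0
          obtain ⟨hcf, hinv⟩ := h0
          have ht := ih hinv
          rw [hcf] at ht
          simp only [List.replicate_zero, List.nil_append] at ht
          calc true :: t = true :: List.replicate (t.count true) true := by rw [← ht]
            _ = _ := by simp [List.count_cons, hcf, List.replicate_succ]

lemma exists_tf_split : ∀ (w : List (Bool × ZMod n)), invB (w.map Prod.fst) ≠ 0 →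
    ∃ (u : List (Bool × ZMod n)) (a b : ZMod n) (v : List (Bool × ZMod n)),
      w = u ++ (true, a) :: (false, b) :: v := by
  intro w
  induction w with
  | nil => intro h; exact absurd rfl h
  | cons x t ih =>
      intro h
      obtain ⟨c, j⟩ := x
      cases c with
      | false =>
          have h' : invB (t.map Prod.fst) ≠ 0 := by
            simpa [invB] using h
          obtain ⟨u, a, b, v, hv⟩ := ih h'
          exact ⟨(false, j) :: u, a, b, v, by rw [hv]; rfl⟩
      | true =>
          cases t with
          | nil => exfalso; simp [invB] at h
          | cons y t' =>
              obtain ⟨d, k⟩ := y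
              cases d with
              | false => exact ⟨[], j, k, t', rfl⟩
              | true =>
                  have h' : invB (((true, k) :: t').map Prod.fst) ≠ 0 := by
                    simp [invB, List.count_cons] at h ⊢
                    omega
                  obtain ⟨u, a, b, v, hv⟩ := ih h'
                  exact ⟨(true, j) :: u, a, b, v, by rw [hv]; rfl⟩

lemma invB_swap (mu mv : List Bool) :
    invB (mu ++ true :: false :: mv) = invB (mu ++ false :: true :: mv) + 1 := by
  simp only [invB_append, invB, if_true, if_neg Bool.false_ne_true, List.count_cons]
  simp
  omega

lemma normSorted (w : List (Bool × ZMod n)) (h0 : invB (w.map Prod.fst) = 0) (hne : w ≠ []) :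
    pp K n (wordProd K n w) = 0 ∨ ∃ (i : ZMod n) (ℓ m : ℕ), ℓ + m = w.length ∧
      pp K n (wordProd K n w) = pp K n (aPath K n i ℓ * sPath K n (i + (ℓ : ZMod n)) m) := by
  rcases sortedWord K n w _ _ (invB_zero_sorted _ h0) hne with h | ⟨i, hi⟩
  · exact Or.inl h
  · refine Or.inr ⟨i, _, _, ?_, hi⟩
    rw [count_false_add_count_true, List.length_map]

lemma normalizeAux : ∀ (N : ℕ) (w : List (Bool × ZMod n)),
    invB (w.map Prod.fst) ≤ N → w ≠ [] →
    pp K n (wordProd K n w) = 0 ∨ ∃ (i : ZMod n) (ℓ m : ℕ), ℓ + m = w.length ∧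
      pp K n (wordProd K n w) = pp K n (aPath K n i ℓ * sPath K n (i + (ℓ : ZMod n)) m) := by
  intro N
  induction N with
  | zero =>
      intro w hN hne
      exact normSorted K n w (Nat.le_zero.mp hN) hne
  | succ N ih =>
      intro w hN hne
      by_cases h0 : invB (w.map Prod.fst) = 0
      · exact normSorted K n w h0 hne
      obtain ⟨u, a, b, v, hsplit⟩ := exists_tf_split n w h0
      subst hsplit
      have hexp : pp K n (wordProd K n (u ++ (true, a) :: (false, b) :: v))
          = pp K n (wordProd K n u)
            * (pp K n (S K n a) * (pp K n (A K n b) * pp K n (wordProd K n v))) := by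
        rw [wordProd_append, wordProd_cons, wordProd_cons, arrGen_true, arrGen_false,
          map_mul, map_mul, map_mul]
      by_cases hba : b = a
      · subst hba
        have hkey : pp K n (S K n b) * pp K n (A K n b)
            = pp K n (A K n (b+1)) * pp K n (S K n (b+1)) := by
          have h := pAS K n (b+1)
          rw [show (b : ZMod n) + 1 - 1 = b by ring] at h
          exact h.symm
        set w' := u ++ (false, b+1) :: (true, b+1) :: v with hw'
        have hexp' : pp K n (wordProd K n w')
            = pp K n (wordProd K n u)
              * (pp K n (A K n (b+1)) * (pp K n (S K n (b+1)) * pp K n (wordProd K n v))) := by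
          rw [hw', wordProd_append, wordProd_cons, wordProd_cons, arrGen_true, arrGen_false,
            map_mul, map_mul, map_mul]
        have heq : pp K n (wordProd K n (u ++ (true, b) :: (false, b) :: v))
            = pp K n (wordProd K n w') := by
          rw [hexp, hexp', ← mul_assoc (pp K n (S K n b)), hkey, mul_assoc]
        have hinv : invB (w'.map Prod.fst) ≤ N := by
          have hs : invB ((u ++ (true, b) :: (false, b) :: v).map Prod.fst)
              = invB (w'.map Prod.fst) + 1 := by
            rw [hw']
            simp only [List.map_append, List.map_cons]
            exact invB_swap (u.map Prod.fst) (v.map Prod.fst)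
          omega
        have hne' : w' ≠ [] := by
          rw [hw']; intro hcon
          exact absurd (congrArg List.length hcon) (by simp)
        rcases ih w' hinv hne' with h | ⟨i, ℓ, m, hlm, heq2⟩
        · exact Or.inl (heq.trans h)
        · refine Or.inr ⟨i, ℓ, m, ?_, heq.trans heq2⟩
          rw [hlm, hw']
          simp
      · -- non-composable: product is zero
        refine Or.inl ?_
        have hz : pp K n (S K n a) * pp K n (A K n b) = 0 := by
          rw [show pp K n (A K n b) = pp K n (E K n b) * pp K n (A K n b) by
              rw [pEA, if_pos rfl], ← mul_assoc]
          have h := pSE K n a b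
          rw [if_neg hba] at h
          rw [h, zero_mul]
        rw [hexp, ← mul_assoc (pp K n (S K n a)), hz, zero_mul, mul_zero]

lemma stNormalize (w : List (Bool × ZMod n)) (hne : w ≠ []) :
    pp K n (wordProd K n w) = 0 ∨ ∃ (i : ZMod n) (ℓ m : ℕ), ℓ + m = w.length ∧
      pp K n (wordProd K n w) = pp K n (aPath K n i ℓ * sPath K n (i + (ℓ : ZMod n)) m) :=
  normalizeAux K n (invB (w.map Prod.fst)) w le_rfl hne

end St19Aux4

section St19Aux5
set_option linter.unusedSectionVars false

lemma val_cast_self (x : ZMod n) : ((x.val : ℕ) : ZMod n) = x := by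
  simp [ZMod.natCast_val, ZMod.cast_id]

/-- A long canonical path passes through vertex i. -/
lemma long_through (i j : ZMod n) (ℓ m : ℕ) (hlm : 2 * n + 1 ≤ ℓ + m) (hn : 0 < n) :
    ∃ u v : Preproj K n,
      pp K n (aPath K n j ℓ * sPath K n (j + (ℓ : ZMod n)) m)
        = u * pp K n (E K n i) * v := by
  have hcase : n ≤ ℓ ∨ n ≤ m := by omega
  rcases hcase with hl | hm
  · set k := (i - j).val with hk
    have hkn : k < n := ZMod.val_lt _
    have hjk : j + (k : ZMod n) = i := by rw [hk, val_cast_self]; ring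
    have hsplit := aPath_split K n k (ℓ - k) j
    rw [show k + (ℓ - k) = ℓ by omega, hjk] at hsplit
    refine ⟨pp K n (aPath K n j k),
      pp K n (aPath K n i (ℓ - k)) * pp K n (sPath K n (j + (ℓ : ZMod n)) m), ?_⟩
    have h1 : pp K n (E K n i)
        * (pp K n (aPath K n i (ℓ - k)) * pp K n (sPath K n (j + (ℓ : ZMod n)) m))
        = pp K n (aPath K n i (ℓ - k)) * pp K n (sPath K n (j + (ℓ : ZMod n)) m) := by
      rw [← mul_assoc, paEl, if_pos rfl]
    calc pp K n (aPath K n j ℓ * sPath K n (j + (ℓ : ZMod n)) m)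
        = pp K n (aPath K n j k)
          * (pp K n (aPath K n i (ℓ - k)) * pp K n (sPath K n (j + (ℓ : ZMod n)) m)) := by
          rw [map_mul, hsplit, mul_assoc]
      _ = pp K n (aPath K n j k)
          * (pp K n (E K n i)
            * (pp K n (aPath K n i (ℓ - k)) * pp K n (sPath K n (j + (ℓ : ZMod n)) m))) := by
          rw [h1]
      _ = _ := by rw [← mul_assoc]
  · set k := ((j + (ℓ : ZMod n)) - i).val with hk
    have hkn : k < n := ZMod.val_lt _
    have hjk : (j + (ℓ : ZMod n)) - (k : ZMod n) = i := by rw [hk, val_cast_self]; ring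
    have hsplit := sPath_split K n k (m - k) (j + (ℓ : ZMod n))
    rw [show k + (m - k) = m by omega, hjk] at hsplit
    refine ⟨pp K n (aPath K n j ℓ) * pp K n (sPath K n (j + (ℓ : ZMod n)) k),
      pp K n (sPath K n i (m - k)), ?_⟩
    have h1 : pp K n (E K n i) * pp K n (sPath K n i (m - k))
        = pp K n (sPath K n i (m - k)) := by rw [psEl, if_pos rfl]
    calc pp K n (aPath K n j ℓ * sPath K n (j + (ℓ : ZMod n)) m)
        = pp K n (aPath K n j ℓ) * pp K n (sPath K n (j + (ℓ : ZMod n)) k)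
          * pp K n (sPath K n i (m - k)) := by
          rw [map_mul, hsplit, mul_assoc]
      _ = pp K n (aPath K n j ℓ) * pp K n (sPath K n (j + (ℓ : ZMod n)) k)
          * (pp K n (E K n i) * pp K n (sPath K n i (m - k))) := by rw [h1]
      _ = _ := by rw [← mul_assoc]

/-- Main preprojective-level statement: any long word factors through e_i, or is 0. -/
lemma long_mem (i : ZMod n) (w : List (Bool × ZMod n)) (hw : 2 * n + 1 ≤ w.length)
    (hn : 0 < n) :
    pp K n (wordProd K n w) = 0 ∨ ∃ u v : Preproj K n,
      pp K n (wordProd K n w) = u * pp K n (E K n i) * v := by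
  have hne : w ≠ [] := by
    intro hcon; rw [hcon] at hw; simp at hw
  rcases stNormalize K n w hne with h | ⟨j, ℓ, m, hlm, heq⟩
  · exact Or.inl h
  · obtain ⟨u, v, huv⟩ := long_through K n i j ℓ m (by omega) hn
    exact Or.inr ⟨u, v, heq.trans huv⟩

end St19Aux5

section St19Dihedral
set_option linter.unusedSectionVars false

/-- Rotation by a. -/
def rotP (a : ZMod n) : PairPerm n :=
  (Equiv.addRight a, (Equiv.refl Bool).prodCongr (Equiv.addRight a))

/-- Reflection indexed by a : e_j ↦ e_{a-j}. -/
def refP (a : ZMod n) : PairPerm n :=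
  (Function.Involutive.toPerm (fun j => a - j) (fun j => by simp),
   Function.Involutive.toPerm (fun p => (!p.1, a - p.2 - 1))
     (fun p => by
       cases p with
       | mk b j => simp only [Bool.not_not, Prod.mk.injEq]; exact ⟨trivial, by ring⟩))

lemma rotP_fst (a j : ZMod n) : (rotP n a).1 j = j + a := rfl
lemma refP_fst (a j : ZMod n) : (refP n a).1 j = a - j := rfl

lemma rotP_mul_rotP (a b : ZMod n) : rotP n a * rotP n b = rotP n (b + a) := by
  refine Prod.ext (Equiv.ext fun x => ?_) (Equiv.ext fun p => ?_)
  · simp [Function.Involutive.toPerm, rotP, refP, Prod.fst_mul, Equiv.Perm.mul_apply]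
    try ring
  · obtain ⟨c, j⟩ := p
    simp [Function.Involutive.toPerm, rotP, refP, Prod.snd_mul, Equiv.Perm.mul_apply]
    try ring

lemma rotP_mul_refP (a b : ZMod n) : rotP n a * refP n b = refP n (b + a) := by
  refine Prod.ext (Equiv.ext fun x => ?_) (Equiv.ext fun p => ?_)
  · simp [Function.Involutive.toPerm, rotP, refP, Prod.fst_mul, Equiv.Perm.mul_apply]
    try ring
  · obtain ⟨c, j⟩ := p
    simp [Function.Involutive.toPerm, rotP, refP, Prod.snd_mul, Equiv.Perm.mul_apply]
    try ring

lemma refP_mul_rotP (a b : ZMod n) : refP n b * rotP n a = refP n (b - a) := by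
  refine Prod.ext (Equiv.ext fun x => ?_) (Equiv.ext fun p => ?_)
  · simp [Function.Involutive.toPerm, rotP, refP, Prod.fst_mul, Equiv.Perm.mul_apply]
    try ring
  · obtain ⟨c, j⟩ := p
    simp [Function.Involutive.toPerm, rotP, refP, Prod.snd_mul, Equiv.Perm.mul_apply]
    try ring

lemma refP_mul_refP (a b : ZMod n) : refP n a * refP n b = rotP n (a - b) := by
  refine Prod.ext (Equiv.ext fun x => ?_) (Equiv.ext fun p => ?_)
  · simp [Function.Involutive.toPerm, rotP, refP, Prod.fst_mul, Equiv.Perm.mul_apply]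
    try ring
  · obtain ⟨c, j⟩ := p
    simp [Function.Involutive.toPerm, rotP, refP, Prod.snd_mul, Equiv.Perm.mul_apply]
    try ring

lemma rotP_zero : rotP n 0 = 1 := by
  refine Prod.ext (Equiv.ext fun x => ?_) (Equiv.ext fun p => ?_)
  · simp [rotP]
  · cases p with
    | mk c j => simp [rotP]

/-- The subgroup of rotations and reflections. -/
def DSet : Subgroup (PairPerm n) where
  carrier := {g | (∃ a, g = rotP n a) ∨ (∃ a, g = refP n a)}
  one_mem' := Or.inl ⟨0, (rotP_zero n).symm⟩
  mul_mem' := by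
    rintro g h (⟨a, rfl⟩ | ⟨a, rfl⟩) (⟨b, rfl⟩ | ⟨b, rfl⟩)
    · exact Or.inl ⟨b + a, by rw [rotP_mul_rotP]⟩
    · exact Or.inr ⟨b + a, by rw [rotP_mul_refP]⟩
    · exact Or.inr ⟨a - b, by rw [refP_mul_rotP]⟩
    · exact Or.inl ⟨a - b, by rw [refP_mul_refP]⟩
  inv_mem' := by
    rintro g (⟨a, rfl⟩ | ⟨a, rfl⟩)
    · refine Or.inl ⟨-a, ?_⟩
      rw [inv_eq_iff_mul_eq_one, rotP_mul_rotP]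
      rw [show -a + a = 0 by ring, rotP_zero]
    · refine Or.inr ⟨a, ?_⟩
      rw [inv_eq_iff_mul_eq_one, refP_mul_refP, sub_self, rotP_zero]

lemma rho_eq : rho n = rotP n 1 := rfl

lemma reflD_eq : reflD n = refP n 0 := by
  refine Prod.ext (Equiv.ext fun x => ?_) (Equiv.ext fun p => ?_)
  · simp [Function.Involutive.toPerm, reflD, refP]
  · cases p with
    | mk c j => simp [Function.Involutive.toPerm, reflD, refP]

lemma tau_eq (i : ZMod n) : tau n i = refP n (2 * i) := rfl

lemma Dn_le_DSet : Dn n ≤ DSet n := by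
  rw [Dn, Subgroup.closure_le]
  rintro g (rfl | rfl)
  · exact Or.inl ⟨1, rho_eq n⟩
  · exact Or.inr ⟨0, reflD_eq n⟩

lemma fix_eq_one_or_tau (g : PairPerm n) (hg : g ∈ Dn n) (i : ZMod n) (hfix : g.1 i = i) :
    g = 1 ∨ g = tau n i := by
  rcases Dn_le_DSet n hg with ⟨a, rfl⟩ | ⟨a, rfl⟩
  · left
    rw [rotP_fst] at hfix
    have ha : a = 0 := by
      have h := hfix
      linear_combination h
    rw [ha, rotP_zero]
  · right
    rw [refP_fst] at hfix
    rw [tau_eq, show a = 2 * i by linear_combination hfix]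

end St19Dihedral

section St19Skew
set_option linter.unusedSectionVars false

lemma ppk_rel {a b : SkFree K n G} (h : SkRel K n G a b) : ppk K n G a = ppk K n G b :=
  RingQuot.mkAlgHom_rel K h

/-- The induced map Π → R#G. -/
noncomputable def Phi : Preproj K n →ₐ[K] SkAlg K n G :=
  RingQuot.liftAlgHom K ⟨(ppk K n G).comp (embR K n G),
    fun x y h => RingQuot.mkAlgHom_rel K (SkRel.base h)⟩

lemma Phi_pp (x : PPFree K n) : Phi K n G (pp K n x) = ppk K n G (embR K n G x) :=
  RingQuot.liftAlgHom_mkAlgHom_apply _ _ _ _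

lemma transfer {x y : PPFree K n} (h : pp K n x = pp K n y) :
    ppk K n G (embR K n G x) = ppk K n G (embR K n G y) := by
  rw [← Phi_pp, ← Phi_pp, h]

lemma embR_E (j : ZMod n) : embR K n G (E K n j) = dg K n G (PPGen.vtx j) :=
  FreeAlgebra.lift_ι_apply _ _

lemma ggOne : ppk K n G (gg K n G 1) = 1 := by
  rw [ppk_rel K n G SkRel.grp_one, map_one]

lemma eFe (i : ZMod n) (hG : G ≤ Dn n) (hτ : tau n i ∉ G) :
    ppk K n G (embR K n G (E K n i)) * fG K n G * ppk K n G (embR K n G (E K n i))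
      = ppk K n G (embR K n G (E K n i)) := by
  haveI instG : Fintype ↥G := Fintype.ofFinite ↥G
  have hfG : fG K n G = ∑ g : ↥G, ppk K n G (gg K n G g) := by
    unfold fG
    rw [Subsingleton.elim (Fintype.ofFinite ↥G) instG, map_sum]
  have hterm : ∀ g : ↥G,
      ppk K n G (embR K n G (E K n i)) * ppk K n G (gg K n G g)
        * ppk K n G (embR K n G (E K n i))
      = if g = 1 then ppk K n G (embR K n G (E K n i)) * ppk K n G (gg K n G g) else 0 := by
    intro g
    have h1 : ppk K n G (gg K n G g) * ppk K n G (embR K n G (E K n i))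
        = ppk K n G (embR K n G (E K n ((g : PairPerm n).1 i))) * ppk K n G (gg K n G g) := by
      rw [embR_E, ← map_mul, ppk_rel K n G (SkRel.comm g (PPGen.vtx i)),
        show actGen n (↑g) (PPGen.vtx i) = PPGen.vtx ((g : PairPerm n).1 i) from rfl, map_mul,
        ← embR_E]
    have h2 : ppk K n G (embR K n G (E K n i))
          * ppk K n G (embR K n G (E K n ((g : PairPerm n).1 i)))
        = if i = (g : PairPerm n).1 i then ppk K n G (embR K n G (E K n i)) else 0 := by
      have h3 := ppk_rel K n G (SkRel.base (PPRel.vtx_mul i ((g : PairPerm n).1 i)))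
      rw [← map_mul, ← map_mul, h3]
      by_cases h : i = (g : PairPerm n).1 i
      · rw [if_pos h, if_pos h]
      · rw [if_neg h, if_neg h, map_zero, map_zero]
    have hiff : (i = (g : PairPerm n).1 i) ↔ g = 1 := by
      constructor
      · intro h
        rcases fix_eq_one_or_tau n (g : PairPerm n) (hG g.2) i h.symm with h1' | h2'
        · exact Subtype.ext (by rw [h1']; rfl)
        · exact absurd (h2' ▸ g.2) hτ
      · intro h
        subst h
        simp
    rw [mul_assoc, h1, ← mul_assoc, h2]
    by_cases h : g = 1
    · rw [if_pos h, if_pos (hiff.mpr h)]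
    · rw [if_neg h, if_neg (fun hc => h (hiff.mp hc)), zero_mul]
  rw [hfG, Finset.mul_sum, Finset.sum_mul,
    Finset.sum_congr rfl (fun g _ => hterm g),
    Finset.sum_ite_eq' Finset.univ (1 : ↥G)
      (fun g => ppk K n G (embR K n G (E K n i)) * ppk K n G (gg K n G g)),
    if_pos (Finset.mem_univ _), ggOne, mul_one]

lemma part1 (hn : 0 < n) (i : ZMod n) (hG : G ≤ Dn n) (hτ : tau n i ∉ G)
    (w : List (Bool × ZMod n)) (hw : 2 * n + 1 ≤ w.length) :
    ppk K n G (embR K n G (wordProd K n w)) ∈ idealFG K n G := by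
  rcases long_mem K n i w hw hn with h | ⟨u, v, huv⟩
  · have hz : ppk K n G (embR K n G (wordProd K n w)) = 0 := by
      have h' := congrArg (Phi K n G) h
      rwa [Phi_pp, map_zero] at h'
    rw [hz]; exact Submodule.zero_mem _
  · have hval : ppk K n G (embR K n G (wordProd K n w))
        = Phi K n G u * ppk K n G (embR K n G (E K n i)) * Phi K n G v := by
      have h' := congrArg (Phi K n G) huv
      rwa [Phi_pp, map_mul, map_mul, Phi_pp] at h'
    rw [hval]
    apply Submodule.subset_span
    refine ⟨Phi K n G u * ppk K n G (embR K n G (E K n i)),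
      ppk K n G (embR K n G (E K n i)) * Phi K n G v, ?_⟩
    calc Phi K n G u * ppk K n G (embR K n G (E K n i)) * Phi K n G v
        = Phi K n G u * (ppk K n G (embR K n G (E K n i)) * fG K n G
            * ppk K n G (embR K n G (E K n i))) * Phi K n G v := by
          rw [eFe K n G i hG hτ]
      _ = Phi K n G u * ppk K n G (embR K n G (E K n i)) * fG K n G
            * (ppk K n G (embR K n G (E K n i)) * Phi K n G v) := by
          noncomm_ring

end St19Skew

section St19Span
set_option linter.unusedSectionVars false

lemma iota_vtx (j : ZMod n) : FreeAlgebra.ι K (PPGen.vtx j) = E K n j := rfl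
lemma iota_arr (j : ZMod n) : FreeAlgebra.ι K (PPGen.arr j) = A K n j := rfl
lemma iota_star (j : ZMod n) : FreeAlgebra.ι K (PPGen.star j) = S K n j := rfl

lemma pE_arr (t : ZMod n) (a : Bool × ZMod n) :
    pp K n (E K n t) * pp K n (FreeAlgebra.ι K (arrGen n a))
      = if t = dsrc n a then pp K n (FreeAlgebra.ι K (arrGen n a)) else 0 := by
  obtain ⟨b, j⟩ := a
  cases b
  · rw [arrGen_false]; exact pEA K n t j
  · rw [arrGen_true]; exact pES K n t j

/-- Product of a word of generators (including idempotents) in the free algebra. -/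
noncomputable def genWord (u : List (PPGen n)) : PPFree K n :=
  (u.map (FreeAlgebra.ι K)).prod

lemma genWord_nil : genWord K n ([] : List (PPGen n)) = 1 := rfl

lemma genWord_cons (x : PPGen n) (u : List (PPGen n)) :
    genWord K n (x :: u) = FreeAlgebra.ι K x * genWord K n u := by
  simp [genWord]

lemma genWord_append (u v : List (PPGen n)) :
    genWord K n (u ++ v) = genWord K n u * genWord K n v := by
  simp [genWord]

/-- Any word of generators reduces, in Π, to 0, an idempotent, or a path. -/
lemma reduceGen : ∀ u : List (PPGen n),
    pp K n (genWord K n u) = 0 ∨ (∃ j, pp K n (genWord K n u) = pp K n (E K n j)) ∨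
      (∃ w : List (Bool × ZMod n), pp K n (genWord K n u) = pp K n (wordProd K n w)) := by
  intro u
  induction u with
  | nil => exact Or.inr (Or.inr ⟨[], rfl⟩)
  | cons x u' ih =>
      have hx : pp K n (genWord K n (x :: u'))
          = pp K n (FreeAlgebra.ι K x) * pp K n (genWord K n u') := by
        rw [genWord_cons, map_mul]
      rcases ih with h0 | ⟨k, hk⟩ | ⟨w, hw⟩
      · left; rw [hx, h0, mul_zero]
      · cases x with
        | vtx j =>
            by_cases h : j = k
            · exact Or.inr (Or.inl ⟨j, by rw [hx, hk, iota_vtx, pEE, if_pos h, h]⟩)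
            · left; rw [hx, hk, iota_vtx, pEE, if_neg h]
        | arr j =>
            by_cases h : k = j + 1
            · refine Or.inr (Or.inr ⟨[(false, j)], ?_⟩)
              rw [hx, hk, iota_arr, pAE, if_pos h, wordProd_cons, wordProd_nil, mul_one,
                arrGen_false]
            · left; rw [hx, hk, iota_arr, pAE, if_neg h]
        | star j =>
            by_cases h : k = j
            · refine Or.inr (Or.inr ⟨[(true, j)], ?_⟩)
              rw [hx, hk, iota_star, pSE, if_pos h, wordProd_cons, wordProd_nil, mul_one,
                arrGen_true]
            · left; rw [hx, hk, iota_star, pSE, if_neg h]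
      · cases x with
        | vtx j =>
            cases w with
            | nil =>
                refine Or.inr (Or.inl ⟨j, ?_⟩)
                rw [hx, hw, wordProd_nil, map_one, mul_one, iota_vtx]
            | cons a w' =>
                by_cases h : j = dsrc n a
                · refine Or.inr (Or.inr ⟨a :: w', ?_⟩)
                  rw [hx, hw, iota_vtx, wordProd_cons, map_mul, ← mul_assoc, pE_arr,
                    if_pos h, ← map_mul, ← wordProd_cons]
                · left
                  rw [hx, hw, iota_vtx, wordProd_cons, map_mul, ← mul_assoc, pE_arr,
                    if_neg h, zero_mul]
        | arr j =>
            refine Or.inr (Or.inr ⟨(false, j) :: w, ?_⟩)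
            rw [hx, hw, wordProd_cons, map_mul, arrGen_false, iota_arr]
        | star j =>
            refine Or.inr (Or.inr ⟨(true, j) :: w, ?_⟩)
            rw [hx, hw, wordProd_cons, map_mul, arrGen_true, iota_star]

lemma embR_iota (x : PPGen n) : embR K n G (FreeAlgebra.ι K x) = dg K n G x :=
  FreeAlgebra.lift_ι_apply _ _

/-- Commuting group elements past path-algebra words. -/
lemma gg_comm (g : ↥G) : ∀ u : List (PPGen n),
    ppk K n G (gg K n G g) * ppk K n G (embR K n G (genWord K n u))
      = ppk K n G (embR K n G (genWord K n (u.map (actGen n (g : PairPerm n)))))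
        * ppk K n G (gg K n G g) := by
  intro u
  induction u with
  | nil => rw [genWord_nil, List.map_nil, genWord_nil, map_one, map_one, mul_one, one_mul]
  | cons x u' ih =>
      rw [genWord_cons, List.map_cons, genWord_cons, map_mul, map_mul, map_mul, map_mul,
        embR_iota, embR_iota, ← mul_assoc, ← map_mul,
        ppk_rel K n G (SkRel.comm g x), map_mul, mul_assoc, ih, ← mul_assoc]

lemma idealFG_mul_right (c : SkAlg K n G) {x : SkAlg K n G} (hx : x ∈ idealFG K n G) :
    x * c ∈ idealFG K n G := by
  refine Submodule.span_induction (p := fun x _ => x * c ∈ idealFG K n G)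
    ?_ ?_ ?_ ?_ hx
  · rintro y ⟨a, b, rfl⟩
    exact Submodule.subset_span ⟨a, b * c, by rw [mul_assoc, mul_assoc]⟩
  · show (0 : SkAlg K n G) * c ∈ idealFG K n G
    rw [zero_mul]; exact Submodule.zero_mem _
  · intro y z _ _ hy hz
    show (y + z) * c ∈ idealFG K n G
    rw [add_mul]; exact Submodule.add_mem _ hy hz
  · intro r y _ hy
    show (r • y) * c ∈ idealFG K n G
    rw [smul_mul_assoc]; exact Submodule.smul_mem _ _ hy

lemma part2 (hn : 0 < n) (i : ZMod n) (hG : G ≤ Dn n) (hτ : tau n i ∉ G) :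
    ∃ s : Finset (SkAlg K n G), ∀ x : SkAlg K n G,
      ∃ y ∈ Submodule.span K (↑s : Set (SkAlg K n G)), x - y ∈ idealFG K n G := by
  classical
  haveI instG : Fintype ↥G := Fintype.ofFinite ↥G
  set T1 : Set (SkAlg K n G) :=
    (fun p : (List (Bool × ZMod n)) × ↥G =>
      ppk K n G (embR K n G (wordProd K n p.1)) * ppk K n G (gg K n G p.2)) ''
        ({w : List (Bool × ZMod n) | w.length ≤ 2 * n} ×ˢ (Set.univ : Set ↥G)) with hT1def
  have hT1 : T1.Finite :=
    Set.Finite.image _ ((List.finite_length_le _ _).prod Set.finite_univ)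
  set T2 : Set (SkAlg K n G) :=
    Set.range (fun p : ZMod n × ↥G =>
      ppk K n G (embR K n G (E K n p.1)) * ppk K n G (gg K n G p.2)) with hT2def
  have hT2 : T2.Finite := Set.finite_range _
  set M : Submodule K (SkAlg K n G) :=
    Submodule.span K (T1 ∪ T2) ⊔ idealFG K n G with hMdef
  -- the normal-form monomials
  set N : Set (SkAlg K n G) :=
    Set.range (fun p : List (PPGen n) × ↥G =>
      ppk K n G (embR K n G (genWord K n p.1) * gg K n G p.2)) with hNdef
  have hNval : ∀ (u : List (PPGen n)) (g : ↥G),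
      ppk K n G (embR K n G (genWord K n u) * gg K n G g)
        = ppk K n G (embR K n G (genWord K n u)) * ppk K n G (gg K n G g) := by
    intro u g; rw [map_mul]
  have hNmul : ∀ x ∈ N, ∀ y ∈ N, x * y ∈ N := by
    rintro _ ⟨⟨u, g⟩, rfl⟩ _ ⟨⟨v, h⟩, rfl⟩
    refine ⟨(u ++ v.map (actGen n (g : PairPerm n)), g * h), ?_⟩
    simp only
    rw [hNval, hNval, hNval, genWord_append, map_mul, map_mul]
    calc ppk K n G (embR K n G (genWord K n u))
          * ppk K n G (embR K n G (genWord K n (v.map (actGen n (g : PairPerm n)))))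
          * ppk K n G (gg K n G (g * h))
        = ppk K n G (embR K n G (genWord K n u))
          * (ppk K n G (embR K n G (genWord K n (v.map (actGen n (g : PairPerm n)))))
            * ppk K n G (gg K n G g)) * ppk K n G (gg K n G h) := by
          rw [← ppk_rel K n G (SkRel.grp_mul g h), map_mul]
          noncomm_ring
      _ = ppk K n G (embR K n G (genWord K n u))
          * (ppk K n G (gg K n G g) * ppk K n G (embR K n G (genWord K n v)))
          * ppk K n G (gg K n G h) := by rw [gg_comm]
      _ = ppk K n G (embR K n G (genWord K n u)) * ppk K n G (gg K n G g)
          * (ppk K n G (embR K n G (genWord K n v)) * ppk K n G (gg K n G h)) := by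
          noncomm_ring
  have hone : (1 : SkAlg K n G) ∈ N := by
    refine ⟨([], 1), ?_⟩
    simp only
    rw [genWord_nil, map_one, one_mul, ggOne]
  have hspan : ∀ z : SkAlg K n G, z ∈ Submodule.span K N := by
    have hmulspan : ∀ x ∈ Submodule.span K N, ∀ y ∈ Submodule.span K N,
        x * y ∈ Submodule.span K N := by
      intro x hxs y hys
      have h1 : x * y ∈ Submodule.span K N * Submodule.span K N :=
        Submodule.mul_mem_mul hxs hys
      rw [Submodule.span_mul_span] at h1
      exact Submodule.span_mono (Set.mul_subset_iff.mpr hNmul) h1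
    intro z
    obtain ⟨z', rfl⟩ : ∃ z', ppk K n G z' = z :=
      RingQuot.mkAlgHom_surjective K (SkRel K n G) z
    induction z' using FreeAlgebra.induction with
    | grade0 r =>
        rw [AlgHom.commutes, Algebra.algebraMap_eq_smul_one]
        exact Submodule.smul_mem _ _ (Submodule.subset_span hone)
    | grade1 x =>
        cases x with
        | inl p =>
            refine Submodule.subset_span ⟨([p], 1), ?_⟩
            simp only
            rw [hNval, ggOne, mul_one,
              show genWord K n [p] = FreeAlgebra.ι K p from by simp [genWord], embR_iota]
            rfl
        | inr g =>
            refine Submodule.subset_span ⟨([], g), ?_⟩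
            simp only
            rw [hNval, genWord_nil, map_one, map_one, one_mul]
            rfl
    | mul a b ha hb => rw [map_mul]; exact hmulspan _ ha _ hb
    | add a b ha hb => rw [map_add]; exact Submodule.add_mem _ ha hb
  have hNM : N ⊆ (M : Set (SkAlg K n G)) := by
    rintro _ ⟨⟨u, g⟩, rfl⟩
    simp only
    rw [hNval]
    rcases reduceGen K n u with h0 | ⟨j, hj⟩ | ⟨w, hw⟩
    · have hz : ppk K n G (embR K n G (genWord K n u)) = 0 := by
        have h' := congrArg (Phi K n G) h0
        rwa [Phi_pp, map_zero] at h'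
      rw [hz, zero_mul]
      exact Submodule.zero_mem _
    · have he : ppk K n G (embR K n G (genWord K n u))
          = ppk K n G (embR K n G (E K n j)) := transfer K n G hj
      rw [he]
      exact Submodule.mem_sup_left
        (Submodule.subset_span (Or.inr ⟨(j, g), rfl⟩))
    · have he : ppk K n G (embR K n G (genWord K n u))
          = ppk K n G (embR K n G (wordProd K n w)) := transfer K n G hw
      rw [he]
      by_cases hlen : 2 * n + 1 ≤ w.length
      · exact Submodule.mem_sup_right
          (idealFG_mul_right K n G _ (part1 K n G hn i hG hτ w hlen))
      · have hlen' : w.length ≤ 2 * n := by omega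
        exact Submodule.mem_sup_left
          (Submodule.subset_span (Or.inl ⟨(w, g), ⟨hlen', Set.mem_univ _⟩, rfl⟩))
  refine ⟨(hT1.union hT2).toFinset, ?_⟩
  intro x
  have hxM : x ∈ M := (Submodule.span_le.mpr hNM) (hspan x)
  rw [hMdef, Submodule.mem_sup] at hxM
  obtain ⟨y, hy, z, hz, hyz⟩ := hxM
  refine ⟨y, ?_, ?_⟩
  · rwa [Set.Finite.coe_toFinset]
  · rw [← hyz, add_sub_cancel_left]
    exact hz

end St19Span

/-- if the unique reflection τ of D_n fixing the vertex e_i does not lie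
in G ≤ D_n, then the ideal (f_G) of R#G contains p#1 for every path p of length at
least 2n+1; consequently (R#G)/(f_G) is finite dimensional over k. -/
theorem statement19 [IsAlgClosed K] [CharZero K] (h3 : 3 ≤ n)
    (hG : G ≤ Dn n) (i : ZMod n) (hτ : tau n i ∉ G) :
    (∀ w : List (Bool × ZMod n), 2 * n + 1 ≤ w.length →
      ppk K n G (embR K n G (wordProd K n w)) ∈ idealFG K n G) ∧
    (∃ s : Finset (SkAlg K n G), ∀ x : SkAlg K n G,
      ∃ y ∈ Submodule.span K (↑s : Set (SkAlg K n G)), x - y ∈ idealFG K n G) := by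
  have hn : 0 < n := by omega
  exact ⟨fun w hw => part1 K n G hn i hG hτ w hw, part2 K n G hn i hG hτ⟩
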